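/- Let (G_l,...,G_1) be a polynomial complex over S with column degree table (a_l,...,a_1), and let C = Im(G_1) ⊆ S^q. Then (G_l,...,G_1) has the PD property if and only if Im(G_1^H) = C^H and the homogenized complex 0 → T^{p_l}(−a_l) → ... → T^{p_1}(−a_1) → T^q is an exact sequence of graded T-modules. -/

import Mathlib

open MvPolynomial

noncomputable section

/-- Polynomials of total degree at most `d`. -/
def polyDegLE (F : Type) [Field F] (n : ℕ) (d : ℤ) :
    Submodule F (MvPolynomial (Fin n) F) where
  carrier := {f | ∀ m ∈ f.support, ((m.sum fun _ e => e : ℕ) : ℤ) ≤ d}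
  add_mem' := fun hf hg m hm =>
    (Finset.mem_union.1 (MvPolynomial.support_add hm)).elim (hf m) (hg m)
  zero_mem' := by simp
  smul_mem' := fun c f hf m hm => hf m (MvPolynomial.support_smul hm)

/-- The filtration `S^p[-a]_{≤ d}`. -/
def filt (F : Type) [Field F] (n p : ℕ) (a : Fin p → ℕ) (d : ℤ) :
    Submodule F (Fin p → MvPolynomial (Fin n) F) :=
  Submodule.pi Set.univ fun i => polyDegLE F n (d - a i)

/-- Homogenization in degree `d` : `f(D) ↦ D₀^d f(D/D₀)`, `D₀` being variable `0`. -/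
def homogL (F : Type) [Field F] (n : ℕ) (d : ℕ) :
    MvPolynomial (Fin n) F →ₗ[F] MvPolynomial (Fin (n+1)) F :=
  ∑ k ∈ Finset.range (d+1),
    (LinearMap.mulLeft F ((X 0 : MvPolynomial (Fin (n+1)) F) ^ (d-k))).comp
      ((homogeneousComponent k).comp (rename (Fin.succ)).toLinearMap)

/-- Componentwise homogenization in degree `d` of vectors, `S^q_{≤d} → T^q_d`. -/
def vecHomog (F : Type) [Field F] (n q d : ℕ) :
    (Fin q → MvPolynomial (Fin n) F) →ₗ[F] (Fin q → MvPolynomial (Fin (n+1)) F) :=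
  LinearMap.pi fun i => (homogL F n d).comp (LinearMap.proj i)

/-- `C_{≤d} = C ∩ S^q_{≤d}`, as an `F`-subspace of `S^q`. -/
def codeLE (F : Type) [Field F] (n q : ℕ)
    (C : Submodule (MvPolynomial (Fin n) F) (Fin q → MvPolynomial (Fin n) F))
    (d : ℤ) : Submodule F (Fin q → MvPolynomial (Fin n) F) :=
  (C.restrictScalars F) ⊓ filt F n q (fun _ => 0) d

/-- `C^H_d` : the image of `C_{≤d}` under the degree-`d` homogenization. -/
def CHd (F : Type) [Field F] (n q : ℕ)
    (C : Submodule (MvPolynomial (Fin n) F) (Fin q → MvPolynomial (Fin n) F))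
    (d : ℕ) : Submodule F (Fin q → MvPolynomial (Fin (n+1)) F) :=
  Submodule.map (vecHomog F n q d) (codeLE F n q C (d : ℤ))

/-- The homogenization `C^H = ⊕_{d ≥ 0} C^H_d` of the code `C` (as a subspace of
`T^q`, its carrier is the sum of the spaces `C^H_d`). -/
def CH (F : Type) [Field F] (n q : ℕ)
    (C : Submodule (MvPolynomial (Fin n) F) (Fin q → MvPolynomial (Fin n) F)) :
    Submodule F (Fin q → MvPolynomial (Fin (n+1)) F) :=
  ⨆ d : ℕ, CHd F n q C d

open scoped Classical

/-- The `a`-degree of the `j`-th column of a matrix `G` with no zero columns. -/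
def colDeg {F : Type} [Field F] {n p r : ℕ} (a : Fin p → ℕ)
    (G : Matrix (Fin p) (Fin r) (MvPolynomial (Fin n) F)) (j : Fin r) : ℕ :=
  Finset.univ.sup fun i => if G i j = 0 then 0 else a i + (G i j).totalDegree

/-- The homogenization `G^H` of a matrix `G` relative to the degree functions
`a, a'` : the `(r,c)` entry is `D₀^{a' c − a r} (G r c)(D/D₀)`. -/
def homogMatrix (F : Type) [Field F] (n : ℕ) {p p' : ℕ}
    (a : Fin p → ℕ) (a' : Fin p' → ℕ)
    (G : Matrix (Fin p) (Fin p') (MvPolynomial (Fin n) F)) :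
    Matrix (Fin p) (Fin p') (MvPolynomial (Fin (n+1)) F) :=
  fun r c => homogL F n (a' c - a r) (G r c)

namespace PDaux

variable {F : Type} [Field F] {n : ℕ}

lemma sum_hc {σ : Type*} (g : MvPolynomial σ F) {N : ℕ} (h : g.totalDegree < N) :
    ∑ k ∈ Finset.range N, homogeneousComponent k g = g := by
  have : ∑ k ∈ Finset.range N, homogeneousComponent k g
      = ∑ k ∈ Finset.range (g.totalDegree+1), homogeneousComponent k g := by
    symm
    apply Finset.sum_subset
    · intro k hk
      simp only [Finset.mem_range] at *
      omega
    · intro k _ hk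
      simp only [Finset.mem_range, not_lt] at hk
      exact homogeneousComponent_eq_zero k g (by omega)
  rw [this, MvPolynomial.sum_homogeneousComponent]

/-- evaluation at `D₀ = 1`. -/
def phi (F : Type) [Field F] (n : ℕ) :
    MvPolynomial (Fin (n+1)) F →ₐ[F] MvPolynomial (Fin n) F :=
  aeval (Fin.cases 1 X)

lemma phi_rename (f : MvPolynomial (Fin n) F) : phi F n (rename Fin.succ f) = f := by
  rw [phi, aeval_rename]
  have : (Fin.cases 1 X ∘ Fin.succ : Fin n → MvPolynomial (Fin n) F) = X := by
    funext i; simp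
  rw [this, aeval_X_left_apply]

lemma homogL_apply (d : ℕ) (f : MvPolynomial (Fin n) F) :
    homogL F n d f = ∑ k ∈ Finset.range (d+1),
      (X 0 : MvPolynomial (Fin (n+1)) F) ^ (d-k)
        * homogeneousComponent k (rename Fin.succ f) := by
  simp [homogL, LinearMap.sum_apply]

lemma phi_homogL {d : ℕ} {f : MvPolynomial (Fin n) F} (h : f.totalDegree ≤ d) :
    phi F n (homogL F n d f) = f := by
  rw [homogL_apply, map_sum]
  have hX : phi F n (X 0) = 1 := by simp [phi]
  calc ∑ k ∈ Finset.range (d+1), phi F n ((X 0 : MvPolynomial (Fin (n+1)) F) ^ (d-k)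
        * homogeneousComponent k (rename Fin.succ f))
      = ∑ k ∈ Finset.range (d+1), phi F n (homogeneousComponent k (rename Fin.succ f)) := by
        apply Finset.sum_congr rfl; intro k _
        rw [map_mul, map_pow, hX, one_pow, one_mul]
    _ = phi F n (∑ k ∈ Finset.range (d+1), homogeneousComponent k (rename Fin.succ f)) := by
        rw [map_sum]
    _ = f := by
        rw [sum_hc _ (lt_of_le_of_lt (le_trans (totalDegree_rename_le _ _) h) (by omega))]
        exact phi_rename f

lemma homogL_mem (d : ℕ) (f : MvPolynomial (Fin n) F) :
    homogL F n d f ∈ homogeneousSubmodule (Fin (n+1)) F d := by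
  rw [homogL_apply]
  apply Submodule.sum_mem
  intro k hk
  rw [Finset.mem_range] at hk
  rw [mem_homogeneousSubmodule]
  have h1 : ((X 0 : MvPolynomial (Fin (n+1)) F) ^ (d-k)).IsHomogeneous (d-k) := by
    simpa using (isHomogeneous_X F (0 : Fin (n+1))).pow (d-k)
  have h2 := homogeneousComponent_isHomogeneous k (rename (Fin.succ) f)
  have := h1.mul h2
  rwa [Nat.sub_add_cancel (by omega)] at this

lemma degree_sum_eq {m : ℕ} (u : Fin m →₀ ℕ) : u.degree = u.sum fun _ e => e := rfl

lemma degree_mapDomain (u : Fin n →₀ ℕ) :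
    (Finsupp.mapDomain Fin.succ u).degree = u.degree := by
  rw [degree_sum_eq, degree_sum_eq,
    Finsupp.sum_mapDomain_index (fun _ => rfl) (fun _ _ _ => rfl)]

lemma degree_add {m : ℕ} (u v : Fin m →₀ ℕ) : (u + v).degree = u.degree + v.degree := by
  simp [Finsupp.degree_eq_weight_one]

lemma degree_single {m : ℕ} (j : Fin m) (k : ℕ) : (Finsupp.single j k).degree = k := by
  rw [degree_sum_eq, Finsupp.sum_single_index rfl]

lemma homogL_monomial {d : ℕ} (u : Fin n →₀ ℕ) (c : F) (h : u.degree ≤ d) :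
    homogL F n d (monomial u c)
      = monomial (Finsupp.single 0 (d - u.degree) + u.mapDomain Fin.succ) c := by
  rw [homogL_apply, rename_monomial]
  have hmem : (monomial (u.mapDomain Fin.succ) c : MvPolynomial (Fin (n+1)) F)
      ∈ homogeneousSubmodule (Fin (n+1)) F u.degree := by
    rw [mem_homogeneousSubmodule]
    exact isHomogeneous_monomial c (degree_mapDomain u)
  have hsum : ∀ k ∈ Finset.range (d+1),
      (X 0 : MvPolynomial (Fin (n+1)) F) ^ (d-k)
        * homogeneousComponent k (monomial (u.mapDomain Fin.succ) c)
      = if k = u.degree then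
          (X 0 : MvPolynomial (Fin (n+1)) F) ^ (d-u.degree)
            * monomial (u.mapDomain Fin.succ) c else 0 := by
    intro k _
    rw [homogeneousComponent_of_mem hmem]
    split_ifs with hk
    · subst hk; simp
    · simp
  rw [Finset.sum_congr rfl hsum, Finset.sum_ite_eq' (Finset.range (d+1)) u.degree]
  rw [if_pos (Finset.mem_range.2 (by omega))]
  rw [X_pow_eq_monomial, monomial_mul, one_mul]

lemma tail_split (m : Fin (n+1) →₀ ℕ) :
    m = Finsupp.single 0 (m 0)
      + (Finsupp.comapDomain Fin.succ m (Fin.succ_injective n).injOn).mapDomain Fin.succ := by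
  ext j
  induction j using Fin.cases with
  | zero =>
      rw [Finsupp.add_apply, Finsupp.single_eq_same,
        Finsupp.mapDomain_notin_range _ _ (by simp [Fin.succ_ne_zero])]
      omega
  | succ i =>
      rw [Finsupp.add_apply, Finsupp.single_eq_of_ne' (Fin.succ_ne_zero i).symm,
        Finsupp.mapDomain_apply (Fin.succ_injective n), Finsupp.comapDomain_apply, zero_add]

lemma phi_monomial (m : Fin (n+1) →₀ ℕ) (c : F) :
    phi F n (monomial m c)
      = monomial (Finsupp.comapDomain Fin.succ m (Fin.succ_injective n).injOn) c := by
  set v := Finsupp.comapDomain Fin.succ m (Fin.succ_injective n).injOn with hv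
  rw [phi, aeval_monomial]
  conv_lhs => rw [tail_split m, ← hv]
  rw [Finsupp.prod_add_index' (fun a => pow_zero _) (fun a b₁ b₂ => pow_add _ _ _)]
  rw [Finsupp.prod_single_index
    (h := fun a e => (Fin.cases 1 X a : MvPolynomial (Fin n) F) ^ e) (pow_zero _)]
  rw [Finsupp.prod_mapDomain_index_inj (Fin.succ_injective n)]
  have h0 : (Fin.cases 1 X (0 : Fin (n+1)) : MvPolynomial (Fin n) F) = 1 := rfl
  have hs : ∀ i : Fin n, (Fin.cases 1 X (Fin.succ i) : MvPolynomial (Fin n) F) = X i :=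
    fun i => rfl
  simp only [h0, hs, one_pow, one_mul]
  rw [monomial_eq]
  rfl

lemma homogL_phi {d : ℕ} {h : MvPolynomial (Fin (n+1)) F}
    (hh : h ∈ homogeneousSubmodule (Fin (n+1)) F d) : homogL F n d (phi F n h) = h := by
  conv_rhs => rw [← h.support_sum_monomial_coeff]
  conv_lhs => rw [← h.support_sum_monomial_coeff]
  rw [map_sum, map_sum]
  apply Finset.sum_congr rfl
  intro m hm
  have hdeg : m.degree = d := by
    rw [mem_homogeneousSubmodule] at hh
    have := hh (MvPolynomial.mem_support_iff.1 hm)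
    rwa [Pi.one_def, ← Finsupp.degree_eq_weight_one] at this
  rw [phi_monomial]
  set v := Finsupp.comapDomain Fin.succ m (Fin.succ_injective n).injOn with hv
  have hsplit := tail_split m
  have hdv : m.degree = m 0 + v.degree := by
    conv_lhs => rw [hsplit]
    rw [degree_add, degree_mapDomain, degree_single]
  rw [homogL_monomial v _ (by omega)]
  have : d - v.degree = m 0 := by omega
  rw [this, ← hsplit]

lemma totalDegree_phi_le (h : MvPolynomial (Fin (n+1)) F) :
    (phi F n h).totalDegree ≤ h.totalDegree := by
  conv_lhs => rw [← h.support_sum_monomial_coeff, map_sum]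
  refine le_trans (totalDegree_finset_sum _ _) (Finset.sup_le ?_)
  intro m hm
  rw [phi_monomial]
  have hL : (monomial (Finsupp.comapDomain Fin.succ m (Fin.succ_injective n).injOn) (coeff m h)
      : MvPolynomial (Fin n) F).totalDegree
      ≤ (Finsupp.comapDomain Fin.succ m (Fin.succ_injective n).injOn).degree :=
    totalDegree_monomial_le _ _
  have hR : m.degree ≤ h.totalDegree := le_totalDegree hm
  have hdv : m.degree = m 0 + (Finsupp.comapDomain Fin.succ m
      (Fin.succ_injective n).injOn).degree := by
    conv_lhs => rw [tail_split m]
    rw [degree_add, degree_mapDomain, degree_single]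
  omega

lemma homogL_shift {d a : ℕ} {f : MvPolynomial (Fin n) F} (ha : a ≤ d)
    (hf : f.totalDegree ≤ d - a) :
    homogL F n d f = X 0 ^ a * homogL F n (d-a) f := by
  rw [homogL_apply, homogL_apply, Finset.mul_sum]
  have hsub : Finset.range (d-a+1) ⊆ Finset.range (d+1) := by
    intro k hk; simp only [Finset.mem_range] at *; omega
  rw [← Finset.sum_subset hsub]
  · apply Finset.sum_congr rfl
    intro k hk
    rw [Finset.mem_range] at hk
    rw [← mul_assoc, ← pow_add]
    congr 2
    omega
  · intro k hk hk2
    simp only [Finset.mem_range, not_lt] at hk hk2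
    rw [homogeneousComponent_eq_zero k _
      (by calc (rename Fin.succ f).totalDegree ≤ f.totalDegree := totalDegree_rename_le _ _
            _ < k := by omega),
      mul_zero]

lemma homogL_mul {d₁ d₂ : ℕ} {f g : MvPolynomial (Fin n) F}
    (h₁ : f.totalDegree ≤ d₁) (h₂ : g.totalDegree ≤ d₂) :
    homogL F n (d₁+d₂) (f*g) = homogL F n d₁ f * homogL F n d₂ g := by
  have m1 := homogL_mem (F := F) d₁ f
  have m2 := homogL_mem (F := F) d₂ g
  have mprod : homogL F n d₁ f * homogL F n d₂ g
      ∈ homogeneousSubmodule (Fin (n+1)) F (d₁+d₂) := by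
    rw [mem_homogeneousSubmodule] at *
    exact m1.mul m2
  have hp : phi F n (homogL F n (d₁+d₂) (f*g)) = phi F n (homogL F n d₁ f * homogL F n d₂ g) := by
    rw [phi_homogL (le_trans (totalDegree_mul f g) (by omega)), map_mul,
      phi_homogL h₁, phi_homogL h₂]
  calc homogL F n (d₁+d₂) (f*g)
      = homogL F n (d₁+d₂) (phi F n (homogL F n (d₁+d₂) (f*g))) :=
        (homogL_phi (homogL_mem _ _)).symm
    _ = homogL F n (d₁+d₂) (phi F n (homogL F n d₁ f * homogL F n d₂ g)) := by rw [hp]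
    _ = homogL F n d₁ f * homogL F n d₂ g := homogL_phi mprod

lemma hc_mul_homog {e k : ℕ} {E x : MvPolynomial (Fin (n+1)) F}
    (hE : E ∈ homogeneousSubmodule (Fin (n+1)) F e) :
    homogeneousComponent k (E * x)
      = if e ≤ k then E * homogeneousComponent (k - e) x else 0 := by
  rw [mem_homogeneousSubmodule] at hE
  ext m
  rw [coeff_homogeneousComponent]
  split_ifs with h1 h2 h2
  · rw [coeff_mul, coeff_mul, Finset.sum_congr rfl]
    intro uv huv
    rw [Finset.HasAntidiagonal.mem_antidiagonal] at huv
    by_cases hc : coeff uv.1 E = 0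
    · rw [hc, zero_mul, zero_mul]
    · have hd1 : uv.1.degree = e := by
        have := hE hc; rwa [Pi.one_def, ← Finsupp.degree_eq_weight_one] at this
      rw [coeff_homogeneousComponent, if_pos]
      have := degree_add uv.1 uv.2
      rw [huv, hd1] at this
      omega
  · rw [coeff_mul, MvPolynomial.coeff_zero]
    apply Finset.sum_eq_zero
    intro uv huv
    rw [Finset.HasAntidiagonal.mem_antidiagonal] at huv
    by_cases hc : coeff uv.1 E = 0
    · rw [hc, zero_mul]
    · exfalso
      have hd1 : uv.1.degree = e := by
        have := hE hc; rwa [Pi.one_def, ← Finsupp.degree_eq_weight_one] at this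
      have := degree_add uv.1 uv.2
      rw [huv, hd1] at this
      omega
  · symm
    rw [coeff_mul]
    apply Finset.sum_eq_zero
    intro uv huv
    rw [Finset.HasAntidiagonal.mem_antidiagonal] at huv
    by_cases hc : coeff uv.1 E = 0
    · rw [hc, zero_mul]
    · have hd1 : uv.1.degree = e := by
        have := hE hc; rwa [Pi.one_def, ← Finsupp.degree_eq_weight_one] at this
      rw [coeff_homogeneousComponent, if_neg, mul_zero]
      have := degree_add uv.1 uv.2
      rw [huv, hd1] at this
      omega
  · simp

lemma mem_polyDegLE {f : MvPolynomial (Fin n) F} {e : ℤ} :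
    f ∈ polyDegLE F n e ↔ f = 0 ∨ (f.totalDegree : ℤ) ≤ e := by
  constructor
  · intro hf
    by_cases h0 : f = 0
    · exact Or.inl h0
    · right
      have hne : f.support.Nonempty :=
        Finset.nonempty_iff_ne_empty.2 (fun he => h0 (MvPolynomial.support_eq_empty.1 he))
      obtain ⟨m, hm, hms⟩ := Finset.exists_mem_eq_sup f.support hne
        (fun m => (m.sum fun _ e => e : ℕ))
      have : f.totalDegree = m.sum fun _ e => e := hms
      rw [this]
      exact hf m hm
  · intro hf m hm
    rcases hf with h0 | hd
    · simp [h0] at hm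
    · exact le_trans (by exact_mod_cast le_totalDegree hm) hd

lemma mem_filt_iff {p : ℕ} {a : Fin p → ℕ} {d : ℕ} {f : Fin p → MvPolynomial (Fin n) F} :
    f ∈ filt F n p a d ↔ ∀ c, f c = 0 ∨ (a c ≤ d ∧ (f c).totalDegree ≤ d - a c) := by
  rw [filt, Submodule.mem_pi]
  constructor
  · intro hf c
    have := hf c (Set.mem_univ c)
    rw [mem_polyDegLE] at this
    rcases this with h0 | hd
    · exact Or.inl h0
    · right; constructor <;> omega
  · intro hf c _
    rw [mem_polyDegLE]
    rcases hf c with h0 | ⟨h1, h2⟩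
    · exact Or.inl h0
    · right; omega

/-- homogenization of vectors with degree shifts `a`, at total degree `d`. -/
def psi {p : ℕ} (a : Fin p → ℕ) (d : ℕ) :
    (Fin p → MvPolynomial (Fin n) F) →ₗ[F] (Fin p → MvPolynomial (Fin (n+1)) F) :=
  LinearMap.pi fun c => (homogL F n (d - a c)).comp (LinearMap.proj c)

lemma psi_apply {p : ℕ} (a : Fin p → ℕ) (d : ℕ) (f : Fin p → MvPolynomial (Fin n) F) (c) :
    psi a d f c = homogL F n (d - a c) (f c) := rfl

lemma psi_zero_eq_vecHomog {q d : ℕ} :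
    (psi (fun _ => 0) d : (Fin q → MvPolynomial (Fin n) F) →ₗ[F] _) = vecHomog F n q d := rfl

/-- being a homogeneous element of degree `d` of `T^p(-a)`. -/
def IsGr {p : ℕ} (a : Fin p → ℕ) (d : ℕ) (x : Fin p → MvPolynomial (Fin (n+1)) F) : Prop :=
  ∀ c, x c ∈ homogeneousSubmodule (Fin (n+1)) F (d - a c) ∧ (d < a c → x c = 0)

lemma psi_isGr {p : ℕ} {a : Fin p → ℕ} {d : ℕ} {f : Fin p → MvPolynomial (Fin n) F}
    (hf : f ∈ filt F n p a d) : IsGr a d (psi a d f) := by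
  intro c
  refine ⟨homogL_mem _ _, fun hc => ?_⟩
  rw [mem_filt_iff] at hf
  rcases hf c with h0 | ⟨h1, _⟩
  · rw [psi_apply, h0, map_zero]
  · omega

lemma psi_inj {p : ℕ} {a : Fin p → ℕ} {d : ℕ} {f g : Fin p → MvPolynomial (Fin n) F}
    (hf : f ∈ filt F n p a d) (hg : g ∈ filt F n p a d)
    (h : psi a d f = psi a d g) : f = g := by
  rw [mem_filt_iff] at hf hg
  funext c
  have hc := congrFun h c
  rw [psi_apply, psi_apply] at hc
  rcases hf c with h0 | ⟨h1, h2⟩ <;> rcases hg c with g0 | ⟨g1, g2⟩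
  · rw [h0, g0]
  · rw [h0] at hc ⊢
    rw [map_zero] at hc
    have := congrArg (phi F n) hc
    rwa [map_zero, phi_homogL g2] at this
  · rw [g0] at hc ⊢
    rw [map_zero] at hc
    have := congrArg (phi F n) hc
    rwa [map_zero, phi_homogL h2] at this
  · have := congrArg (phi F n) hc
    rwa [phi_homogL h2, phi_homogL g2] at this

lemma psi_surj {p : ℕ} {a : Fin p → ℕ} {d : ℕ} {x : Fin p → MvPolynomial (Fin (n+1)) F}
    (hx : IsGr a d x) :
    ∃ f, f ∈ filt F n p a d ∧ psi a d f = x := by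
  refine ⟨fun c => phi F n (x c), ?_, ?_⟩
  · rw [mem_filt_iff]
    intro c
    by_cases h0 : x c = 0
    · left; rw [h0, map_zero]
    · right
      have hle : ¬ d < a c := fun hlt => h0 ((hx c).2 hlt)
      refine ⟨by omega, ?_⟩
      have := totalDegree_phi_le (F := F) (x c)
      have h2 : (x c).totalDegree = d - a c := by
        have := (hx c).1
        rw [mem_homogeneousSubmodule] at this
        exact this.totalDegree h0
      omega
  · funext c
    rw [psi_apply]
    exact homogL_phi (hx c).1

/-- the degree-`d` graded piece of `x` in `T^p(-a)`. -/
def piece {p : ℕ} (a : Fin p → ℕ) (d : ℕ) (x : Fin p → MvPolynomial (Fin (n+1)) F) :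
    Fin p → MvPolynomial (Fin (n+1)) F :=
  fun c => if a c ≤ d then homogeneousComponent (d - a c) (x c) else 0

lemma piece_isGr {p : ℕ} (a : Fin p → ℕ) (d : ℕ) (x : Fin p → MvPolynomial (Fin (n+1)) F) :
    IsGr a d (piece a d x) := by
  intro c
  constructor
  · rw [piece]
    split_ifs
    · exact homogeneousComponent_mem _ _
    · exact Submodule.zero_mem _
  · intro hc
    rw [piece, if_neg (by omega)]

lemma sum_piece {p : ℕ} (a : Fin p → ℕ) (x : Fin p → MvPolynomial (Fin (n+1)) F) {N : ℕ}
    (hN : ∀ c, a c + (x c).totalDegree < N) :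
    ∑ d ∈ Finset.range N, piece a d x = x := by
  funext c
  rw [Finset.sum_apply]
  have hstep : ∀ d, piece a d x c
      = if a c ≤ d then homogeneousComponent (d - a c) (x c) else 0 := fun d => rfl
  simp only [hstep]
  have hac : a c ≤ N := by have := hN c; omega
  rw [← Finset.sum_range_add_sum_Ico _ hac]
  rw [Finset.sum_eq_zero (fun d hd => if_neg (by rw [Finset.mem_range] at hd; omega)), zero_add]
  rw [Finset.sum_Ico_eq_sum_range]
  have : ∀ i ∈ Finset.range (N - a c),
      (if a c ≤ a c + i then homogeneousComponent (a c + i - a c) (x c) else 0)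
        = homogeneousComponent i (x c) := by
    intro i _
    rw [if_pos (Nat.le_add_right _ _), Nat.add_sub_cancel_left]
  rw [Finset.sum_congr rfl this]
  exact sum_hc (x c) (by have := hN c; omega)

lemma piece_of_isGr_self {p : ℕ} {a : Fin p → ℕ} {d : ℕ}
    {x : Fin p → MvPolynomial (Fin (n+1)) F} (hx : IsGr a d x) :
    piece a d x = x := by
  funext c
  rw [piece]
  split_ifs with h
  · rw [homogeneousComponent_of_mem (hx c).1, if_pos rfl]
  · exact ((hx c).2 (by omega)).symm

lemma piece_of_isGr_ne {p : ℕ} {a : Fin p → ℕ} {d d' : ℕ}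
    {x : Fin p → MvPolynomial (Fin (n+1)) F} (hx : IsGr a d x) (hne : d' ≠ d) :
    piece a d' x = 0 := by
  funext c
  rw [piece]
  split_ifs with h
  · rw [homogeneousComponent_of_mem (hx c).1]
    split_ifs with h2
    · by_cases h0 : x c = 0
      · exact h0
      · exfalso
        have : ¬ d < a c := fun hlt => h0 ((hx c).2 hlt)
        omega
    · rfl
  · rfl

lemma piece_apply {p : ℕ} (a : Fin p → ℕ) (d : ℕ) (x : Fin p → MvPolynomial (Fin (n+1)) F)
    (c : Fin p) :
    piece a d x c = if a c ≤ d then homogeneousComponent (d - a c) (x c) else 0 := rfl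

lemma mulVec_apply {p p' : ℕ} {R : Type*} [CommSemiring R] (M : Matrix (Fin p) (Fin p') R)
    (v : Fin p' → R) (r : Fin p) : M.mulVec v r = ∑ c, M r c * v c := rfl

/-- the degree condition on the matrix `G` relative to degree tables `a, a'`. -/
def HG {p p' : ℕ} (a : Fin p → ℕ) (a' : Fin p' → ℕ)
    (G : Matrix (Fin p) (Fin p') (MvPolynomial (Fin n) F)) : Prop :=
  ∀ r c, G r c ≠ 0 → a r + (G r c).totalDegree ≤ a' c

lemma hg_of_colDeg {p p' : ℕ} (a : Fin p → ℕ) (a' : Fin p' → ℕ)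
    (G : Matrix (Fin p) (Fin p') (MvPolynomial (Fin n) F))
    (h : ∀ j, a' j = colDeg a G j) : HG a a' G := by
  intro r c hz
  rw [h c, colDeg]
  have := Finset.le_sup (f := fun i => if G i c = 0 then 0 else a i + (G i c).totalDegree)
    (Finset.mem_univ r)
  simp only [if_neg hz] at this
  exact this

lemma homogMatrix_apply {p p' : ℕ} (a : Fin p → ℕ) (a' : Fin p' → ℕ)
    (G : Matrix (Fin p) (Fin p') (MvPolynomial (Fin n) F)) (r c) :
    homogMatrix F n a a' G r c = homogL F n (a' c - a r) (G r c) := rfl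

lemma homogMatrix_entry_mem {p p' : ℕ} (a : Fin p → ℕ) (a' : Fin p' → ℕ)
    (G : Matrix (Fin p) (Fin p') (MvPolynomial (Fin n) F)) (r c) :
    homogMatrix F n a a' G r c ∈ homogeneousSubmodule (Fin (n+1)) F (a' c - a r) :=
  homogL_mem _ _

lemma piece_mulVec {p p' : ℕ} {a : Fin p → ℕ} {a' : Fin p' → ℕ}
    {G : Matrix (Fin p) (Fin p') (MvPolynomial (Fin n) F)} (hG : HG a a' G) (d : ℕ)
    (x : Fin p' → MvPolynomial (Fin (n+1)) F) :
    piece a d ((homogMatrix F n a a' G).mulVec x)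
      = (homogMatrix F n a a' G).mulVec (piece a' d x) := by
  funext r
  rw [piece_apply, mulVec_apply, mulVec_apply]
  split_ifs with h
  · rw [map_sum]
    apply Finset.sum_congr rfl
    intro c _
    rw [piece_apply]
    by_cases hz : G r c = 0
    · rw [show homogMatrix F n a a' G r c = 0 by
        rw [homogMatrix_apply, hz, map_zero], zero_mul, zero_mul, map_zero]
    · have h1 : a r + (G r c).totalDegree ≤ a' c := hG r c hz
      rw [hc_mul_homog (homogMatrix_entry_mem a a' G r c)]
      split_ifs with h2 h3 h3
      · have : d - a r - (a' c - a r) = d - a' c := by omega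
        rw [this]
      · exfalso; omega
      · exfalso; omega
      · rw [mul_zero]
  · symm
    apply Finset.sum_eq_zero
    intro c _
    rw [piece_apply]
    by_cases hz : G r c = 0
    · rw [show homogMatrix F n a a' G r c = 0 by
        rw [homogMatrix_apply, hz, map_zero], zero_mul]
    · have h1 := hG r c hz
      rw [if_neg (by omega), mul_zero]

lemma mulVec_filt {p p' : ℕ} {a : Fin p → ℕ} {a' : Fin p' → ℕ}
    {G : Matrix (Fin p) (Fin p') (MvPolynomial (Fin n) F)} (hG : HG a a' G) {d : ℕ}
    {f : Fin p' → MvPolynomial (Fin n) F} (hf : f ∈ filt F n p' a' d) :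
    G.mulVec f ∈ filt F n p a d := by
  rw [filt, Submodule.mem_pi]
  intro r _
  show (∑ c, G r c * f c) ∈ polyDegLE F n ((d : ℤ) - a r)
  apply Submodule.sum_mem
  intro c _
  rw [mem_polyDegLE]
  by_cases hz : G r c * f c = 0
  · exact Or.inl hz
  · rcases mul_ne_zero_iff.1 hz with ⟨hz1, hz2⟩
    have h1 := hG r c hz1
    have h2 : a' c ≤ d ∧ (f c).totalDegree ≤ d - a' c := by
      rcases mem_filt_iff.1 hf c with h | h
      · exact absurd h hz2
      · exact h
    right
    have := totalDegree_mul (G r c) (f c)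
    have h3 : (G r c * f c).totalDegree + (a r : ℤ) ≤ d := by push_cast; omega
    omega

lemma mulVec_psi {p p' : ℕ} {a : Fin p → ℕ} {a' : Fin p' → ℕ}
    {G : Matrix (Fin p) (Fin p') (MvPolynomial (Fin n) F)} (hG : HG a a' G) {d : ℕ}
    {f : Fin p' → MvPolynomial (Fin n) F} (hf : f ∈ filt F n p' a' d) :
    (homogMatrix F n a a' G).mulVec (psi a' d f) = psi a d (G.mulVec f) := by
  funext r
  rw [mulVec_apply, psi_apply, mulVec_apply, map_sum]
  apply Finset.sum_congr rfl
  intro c _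
  rw [psi_apply]
  by_cases hz1 : G r c = 0
  · rw [show homogMatrix F n a a' G r c = 0 by rw [homogMatrix_apply, hz1, map_zero],
      zero_mul, hz1, zero_mul, map_zero]
  · by_cases hz2 : f c = 0
    · rw [hz2, map_zero, mul_zero, mul_zero, map_zero]
    · have h1 := hG r c hz1
      have h2 : a' c ≤ d ∧ (f c).totalDegree ≤ d - a' c := by
        rcases mem_filt_iff.1 hf c with h | h
        · exact absurd h hz2
        · exact h
      have e1 : d - a r = (a' c - a r) + (d - a' c) := by omega
      rw [e1, homogL_mul (by omega) h2.2, homogMatrix_apply]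

lemma piece_zero {p : ℕ} (a : Fin p → ℕ) (d : ℕ) :
    piece (F := F) (n := n) a d 0 = 0 := by
  funext c
  rw [piece_apply]
  simp

lemma exists_pieces {p : ℕ} (a : Fin p → ℕ) (x : Fin p → MvPolynomial (Fin (n+1)) F) :
    ∃ N : ℕ, ∑ d ∈ Finset.range N, piece a d x = x :=
  ⟨(Finset.univ.sup fun c => a c + (x c).totalDegree) + 1,
   sum_piece a x (fun c => Nat.lt_succ_of_le (Finset.le_sup (f := fun c => a c + (x c).totalDegree) (Finset.mem_univ c)))⟩

lemma mulVec_sum {p p' : ℕ} {R : Type*} [CommRing R] (M : Matrix (Fin p) (Fin p') R) {N : ℕ}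
    (v : ℕ → Fin p' → R) :
    M.mulVec (∑ d ∈ Finset.range N, v d) = ∑ d ∈ Finset.range N, M.mulVec (v d) := by
  have := map_sum M.mulVecLin v (Finset.range N)
  simpa only [Matrix.mulVecLin_apply] using this

end PDaux

/-- Theorem 1, (a) ⇔ (b): a polynomial complex `(G_l, …, G_1)` with
column degree table `(a_l, …, a_1)` and `C = Im G₁` has the PD property if and only
if `Im G₁^H = C^H` and the homogenized complex
`0 → T^{p_l}(−a_l) → ⋯ → T^{p_1}(−a_1) → T^q` is exact. -/
theorem PD_iff_homogenized (F : Type) [Field F] (n : ℕ)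
    (l : ℕ) (hl : 1 ≤ l) (p : ℕ → ℕ)
    (G : ∀ i : ℕ, Matrix (Fin (p i)) (Fin (p (i+1))) (MvPolynomial (Fin n) F))
    (a : ∀ i : ℕ, Fin (p i) → ℕ)
    (ha0 : ∀ j, a 0 j = 0)
    (harec : ∀ i, i + 1 ≤ l → ∀ j, a (i+1) j = colDeg (a i) (G i) j)
    (hnz : ∀ i, i + 1 ≤ l → ∀ j, ∃ r, G i r j ≠ 0)
    (hcomplex : ∀ i, i + 2 ≤ l → ∀ y, (G i).mulVec ((G (i+1)).mulVec y) = 0)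
    (C : Submodule (MvPolynomial (Fin n) F) (Fin (p 0) → MvPolynomial (Fin n) F))
    (hC : LinearMap.range (G 0).mulVecLin = C) :
    -- (a) the PD property: level-wise exactness of the filtered complex
    ((∀ d : ℕ, ∀ c ∈ codeLE F n (p 0) C (d : ℤ),
        ∃ f ∈ filt F n (p 1) (a 1) (d : ℤ), (G 0).mulVec f = c) ∧
     (∀ d : ℕ, ∀ i, i + 2 ≤ l → ∀ f ∈ filt F n (p (i+1)) (a (i+1)) (d : ℤ),
        (G i).mulVec f = 0 →
          ∃ y ∈ filt F n (p (i+2)) (a (i+2)) (d : ℤ), (G (i+1)).mulVec y = f) ∧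
     (∀ d : ℕ, ∀ i, i + 1 = l → ∀ f ∈ filt F n (p (i+1)) (a (i+1)) (d : ℤ),
        (G i).mulVec f = 0 → f = 0))
    ↔
    -- (b) `Im G₁^H = C^H` and the homogenized complex is exact
    ((Submodule.restrictScalars F
        (LinearMap.range (homogMatrix F n (a 0) (a 1) (G 0)).mulVecLin) =
          CH F n (p 0) C) ∧
     (∀ i, i + 2 ≤ l → ∀ y,
        (homogMatrix F n (a i) (a (i+1)) (G i)).mulVec
          ((homogMatrix F n (a (i+1)) (a (i+2)) (G (i+1))).mulVec y) = 0) ∧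
     (∀ i, i + 2 ≤ l → ∀ x,
        (homogMatrix F n (a i) (a (i+1)) (G i)).mulVec x = 0 →
          ∃ y, (homogMatrix F n (a (i+1)) (a (i+2)) (G (i+1))).mulVec y = x) ∧
     (∀ i, i + 1 = l → ∀ y,
        (homogMatrix F n (a i) (a (i+1)) (G i)).mulVec y = 0 → y = 0)) := by
  classical
  have hGi : ∀ i, i + 1 ≤ l → PDaux.HG (a i) (a (i+1)) (G i) :=
    fun i hi => PDaux.hg_of_colDeg _ _ _ (harec i hi)
  have hG0 : PDaux.HG (a 0) (a 1) (G 0) := hGi 0 hl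
  have ha0' : a 0 = fun _ => (0 : ℕ) := funext ha0
  constructor
  · rintro ⟨pa1, pa2, pa3⟩
    refine ⟨?_, ?_, ?_, ?_⟩
    · -- b1 : range G0^H = CH
      apply le_antisymm
      · rintro x hx
        rw [Submodule.restrictScalars_mem, LinearMap.mem_range] at hx
        obtain ⟨v, hv⟩ := hx
        rw [Matrix.mulVecLin_apply] at hv
        obtain ⟨N, hN⟩ := PDaux.exists_pieces (a 1) v
        rw [← hv, ← hN, PDaux.mulVec_sum]
        apply Submodule.sum_mem
        intro d _
        obtain ⟨f, hf, hpsi⟩ := PDaux.psi_surj (PDaux.piece_isGr (a 1) d v)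
        rw [← hpsi, PDaux.mulVec_psi hG0 hf]
        have hfilt0 : (G 0).mulVec f ∈ filt F n (p 0) (fun _ => 0) (d : ℤ) := by
          have := PDaux.mulVec_filt hG0 hf
          rwa [ha0'] at this
        have hmem1 : (G 0).mulVec f ∈ codeLE F n (p 0) C (d : ℤ) := by
          refine Submodule.mem_inf.2 ⟨?_, hfilt0⟩
          rw [Submodule.restrictScalars_mem, ← hC, LinearMap.mem_range]
          exact ⟨f, Matrix.mulVecLin_apply _ _⟩
        have hv2 : PDaux.psi (a 0) d ((G 0).mulVec f)
            = vecHomog F n (p 0) d ((G 0).mulVec f) := by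
          rw [ha0', PDaux.psi_zero_eq_vecHomog]
        rw [hv2]
        show _ ∈ ⨆ d : ℕ, CHd F n (p 0) C d
        exact Submodule.mem_iSup_of_mem d (Submodule.mem_map_of_mem hmem1)
      · show (⨆ d : ℕ, CHd F n (p 0) C d) ≤ _
        apply iSup_le
        intro d
        rintro x ⟨c, hc, rfl⟩
        obtain ⟨f, hf, hGf⟩ := pa1 d c hc
        rw [Submodule.restrictScalars_mem, LinearMap.mem_range]
        refine ⟨PDaux.psi (a 1) d f, ?_⟩
        rw [Matrix.mulVecLin_apply, PDaux.mulVec_psi hG0 hf, hGf, ha0',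
          PDaux.psi_zero_eq_vecHomog]
    · -- b2 : complex
      intro i hi y
      obtain ⟨N, hN⟩ := PDaux.exists_pieces (a (i+2)) y
      rw [← hN, PDaux.mulVec_sum, PDaux.mulVec_sum]
      apply Finset.sum_eq_zero
      intro d _
      obtain ⟨g, hg, hpsig⟩ := PDaux.psi_surj (PDaux.piece_isGr (a (i+2)) d y)
      rw [← hpsig, PDaux.mulVec_psi (hGi (i+1) (by omega)) hg,
        PDaux.mulVec_psi (hGi i (by omega)) (PDaux.mulVec_filt (hGi (i+1) (by omega)) hg),
        hcomplex i hi g, map_zero]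
    · -- b3 : middle exactness
      intro i hi x hx
      obtain ⟨N, hN⟩ := PDaux.exists_pieces (a (i+1)) x
      have key : ∀ d : ℕ, ∃ yd,
          (homogMatrix F n (a (i+1)) (a (i+2)) (G (i+1))).mulVec yd
            = PDaux.piece (a (i+1)) d x := by
        intro d
        obtain ⟨f, hf, hpsi⟩ := PDaux.psi_surj (PDaux.piece_isGr (a (i+1)) d x)
        have h0 : (G i).mulVec f = 0 := by
          apply PDaux.psi_inj (a := a i) (d := d)
            (PDaux.mulVec_filt (hGi i (by omega)) hf) (Submodule.zero_mem _)
          rw [map_zero, ← PDaux.mulVec_psi (hGi i (by omega)) hf, hpsi,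
            ← PDaux.piece_mulVec (hGi i (by omega)) d x, hx, PDaux.piece_zero]
        obtain ⟨g, hg, hGg⟩ := pa2 d i hi f hf h0
        exact ⟨PDaux.psi (a (i+2)) d g, by
          rw [PDaux.mulVec_psi (hGi (i+1) (by omega)) hg, hGg, hpsi]⟩
      choose Y hY using key
      exact ⟨∑ d ∈ Finset.range N, Y d, by
        rw [PDaux.mulVec_sum, Finset.sum_congr rfl (fun d _ => hY d), hN]⟩
    · -- b4 : injectivity at the end
      intro i hi y hy
      obtain ⟨N, hN⟩ := PDaux.exists_pieces (a (i+1)) y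
      rw [← hN]
      apply Finset.sum_eq_zero
      intro d _
      obtain ⟨f, hf, hpsi⟩ := PDaux.psi_surj (PDaux.piece_isGr (a (i+1)) d y)
      have h0 : (G i).mulVec f = 0 := by
        apply PDaux.psi_inj (a := a i) (d := d)
          (PDaux.mulVec_filt (hGi i (by omega)) hf) (Submodule.zero_mem _)
        rw [map_zero, ← PDaux.mulVec_psi (hGi i (by omega)) hf, hpsi,
          ← PDaux.piece_mulVec (hGi i (by omega)) d y, hy, PDaux.piece_zero]
      rw [← hpsi, pa3 d i hi f hf h0, map_zero]
  · rintro ⟨hb1, hb2, hb3, hb4⟩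
    refine ⟨?_, ?_, ?_⟩
    · -- a1
      intro d c hc
      have hcf : c ∈ filt F n (p 0) (fun _ => 0) (d : ℤ) := (Submodule.mem_inf.1 hc).2
      have hx : vecHomog F n (p 0) d c ∈ CH F n (p 0) C := by
        show _ ∈ ⨆ d : ℕ, CHd F n (p 0) C d
        exact Submodule.mem_iSup_of_mem d (Submodule.mem_map_of_mem hc)
      rw [← hb1, Submodule.restrictScalars_mem, LinearMap.mem_range] at hx
      obtain ⟨v, hv⟩ := hx
      rw [Matrix.mulVecLin_apply] at hv
      have hgr : PDaux.IsGr (a 0) d (vecHomog F n (p 0) d c) := by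
        rw [ha0']
        exact PDaux.psi_isGr hcf
      obtain ⟨f, hf, hpsi⟩ := PDaux.psi_surj (PDaux.piece_isGr (a 1) d v)
      refine ⟨f, hf, ?_⟩
      apply PDaux.psi_inj (a := a 0) (d := d) (PDaux.mulVec_filt hG0 hf)
        (by rw [ha0']; exact hcf)
      rw [← PDaux.mulVec_psi hG0 hf, hpsi, ← PDaux.piece_mulVec hG0 d v, hv,
        PDaux.piece_of_isGr_self hgr, ha0', PDaux.psi_zero_eq_vecHomog]
    · -- a2
      intro d i hi f hf h0
      have hgz : (homogMatrix F n (a i) (a (i+1)) (G i)).mulVec (PDaux.psi (a (i+1)) d f) = 0 := by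
        rw [PDaux.mulVec_psi (hGi i (by omega)) hf, h0, map_zero]
      obtain ⟨y, hy⟩ := hb3 i hi (PDaux.psi (a (i+1)) d f) hgz
      obtain ⟨g, hg, hpsig⟩ := PDaux.psi_surj (PDaux.piece_isGr (a (i+2)) d y)
      refine ⟨g, hg, ?_⟩
      apply PDaux.psi_inj (a := a (i+1)) (d := d)
        (PDaux.mulVec_filt (hGi (i+1) (by omega)) hg) hf
      rw [← PDaux.mulVec_psi (hGi (i+1) (by omega)) hg, hpsig,
        ← PDaux.piece_mulVec (hGi (i+1) (by omega)) d y, hy,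
        PDaux.piece_of_isGr_self (PDaux.psi_isGr hf)]
    · -- a3
      intro d i hi f hf h0
      have hgz : (homogMatrix F n (a i) (a (i+1)) (G i)).mulVec (PDaux.psi (a (i+1)) d f) = 0 := by
        rw [PDaux.mulVec_psi (hGi i (by omega)) hf, h0, map_zero]
      have := hb4 i hi (PDaux.psi (a (i+1)) d f) hgz
      exact PDaux.psi_inj hf (Submodule.zero_mem _) (by rw [this, map_zero])
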